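/- Let $I$ be a bounded interval, $X:I\to\mathbb{R}^n$ a bounded Borel path with occupation measure $\mu_X^I$, and let $1<p\leq+\infty$, $-\frac{n}{p}<\alpha<n-\frac{n}{p}$. Then there is a constant $K>0$ depending only on $n,p,\alpha$ such that $\operatorname{diam}(X(I))^{\alpha+n/p}\geq K\,\mathcal{L}^1(I)/\||\xi|^{\alpha}\hat{\mu}_X^I\|_{L^p(\mathbb{R}^n)}$. -/

import Mathlib

open MeasureTheory Metric Set ENNReal

noncomputable def fourierMeasure (n : ℕ) (μ : Measure (EuclideanSpace ℝ (Fin n)))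
    (ξ : EuclideanSpace ℝ (Fin n)) : ℂ :=
  ((((2 * Real.pi) ^ (-(n : ℝ) / 2) : ℝ)) : ℂ) *
    ∫ x, Complex.exp (-(Complex.I * ((inner ℝ x ξ : ℝ) : ℂ))) ∂μ

lemma fourier_lb (n : ℕ) (A B : ℝ) (hAB : A < B)
    (X : ℝ → EuclideanSpace ℝ (Fin n)) (hX : Measurable X)
    (hbd : Bornology.IsBounded (X '' Icc A B)) (ξ : EuclideanSpace ℝ (Fin n))
    (hξ : Metric.diam (X '' Icc A B) * ‖ξ‖ ≤ 1) :
    (2 * Real.pi) ^ (-(n : ℝ) / 2) * Real.cos 1 * (B - A) ≤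
      ‖fourierMeasure n ((volume.restrict (Icc A B)).map X) ξ‖ := by
  set ν := volume.restrict (Icc A B) with hν
  haveI : IsFiniteMeasure ν := by
    refine ⟨?_⟩
    rw [hν, Measure.restrict_apply_univ, Real.volume_Icc]
    exact ENNReal.ofReal_lt_top
  have hc : (0:ℝ) < (2 * Real.pi) ^ (-(n : ℝ) / 2) :=
    Real.rpow_pos_of_pos (by positivity) _
  set x0 := X A with hx0
  set θ : ℝ → ℝ := fun t => (inner ℝ (X t - x0) ξ : ℝ) with hθ
  have hθbd : ∀ t ∈ Icc A B, |θ t| ≤ 1 := by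
    intro t ht
    have h1 : |θ t| ≤ ‖X t - x0‖ * ‖ξ‖ := abs_real_inner_le_norm _ _
    have h2 : ‖X t - x0‖ ≤ Metric.diam (X '' Icc A B) := by
      rw [← dist_eq_norm]
      exact dist_le_diam_of_mem hbd (mem_image_of_mem X ht)
        (mem_image_of_mem X (left_mem_Icc.2 hAB.le))
    calc |θ t| ≤ ‖X t - x0‖ * ‖ξ‖ := h1
      _ ≤ Metric.diam (X '' Icc A B) * ‖ξ‖ := mul_le_mul_of_nonneg_right h2 (norm_nonneg _)
      _ ≤ 1 := hξ
  have hθm : Measurable θ := by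
    have hcont : Continuous fun y : EuclideanSpace ℝ (Fin n) => (inner ℝ y ξ : ℝ) :=
      continuous_id.inner continuous_const
    exact hcont.measurable.comp (hX.sub measurable_const)
  have hmeas : Measurable fun y : EuclideanSpace ℝ (Fin n) =>
      Complex.exp (-(Complex.I * ((inner ℝ y ξ : ℝ) : ℂ))) := by
    have hcont : Continuous fun y : EuclideanSpace ℝ (Fin n) => (inner ℝ y ξ : ℝ) :=
      continuous_id.inner continuous_const
    exact (Complex.continuous_exp.comp
      ((continuous_const.mul (Complex.continuous_ofReal.comp hcont)).neg)).measurable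
  have hmap : ∫ x, Complex.exp (-(Complex.I * ((inner ℝ x ξ : ℝ) : ℂ))) ∂(ν.map X)
      = ∫ t, Complex.exp (-(Complex.I * ((inner ℝ (X t) ξ : ℝ) : ℂ))) ∂ν :=
    integral_map hX.aemeasurable hmeas.aestronglyMeasurable
  have hnorm1 : ∀ r : ℝ, ‖Complex.exp (-(Complex.I * (r:ℂ)))‖ = 1 := by
    intro r
    rw [Complex.norm_exp]
    simp
  have hint : Integrable (fun t => Complex.exp (-(Complex.I * ((θ t : ℝ) : ℂ)))) ν := by
    refine Integrable.mono' (integrable_const 1) ?_ ?_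
    · exact ((Complex.continuous_exp.measurable).comp
        ((measurable_const.mul (Complex.measurable_ofReal.comp hθm)).neg)).aestronglyMeasurable
    · filter_upwards with t
      rw [hnorm1]
  have hsplit : ∀ t, Complex.exp (-(Complex.I * ((inner ℝ (X t) ξ : ℝ) : ℂ)))
      = Complex.exp (-(Complex.I * ((θ t : ℝ) : ℂ))) *
        Complex.exp (-(Complex.I * ((inner ℝ x0 ξ : ℝ) : ℂ))) := by
    intro t
    rw [← Complex.exp_add]
    congr 1
    have h : (inner ℝ (X t) ξ : ℝ) = θ t + (inner ℝ x0 ξ : ℝ) := by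
      simp [hθ, inner_sub_left]
    rw [h]
    push_cast
    ring
  have hRe : Real.cos 1 * (B - A) ≤ (∫ t, Complex.exp (-(Complex.I * ((θ t : ℝ) : ℂ))) ∂ν).re := by
    have hIR : (∫ t, Complex.exp (-(Complex.I * ((θ t : ℝ) : ℂ))) ∂ν).re
        = ∫ t, (Complex.exp (-(Complex.I * ((θ t : ℝ) : ℂ)))).re ∂ν := by
      simpa [RCLike.re_to_complex] using (integral_re hint).symm
    rw [hIR]
    have hre : ∀ t, (Complex.exp (-(Complex.I * ((θ t : ℝ) : ℂ)))).re = Real.cos (θ t) := by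
      intro t
      have h : -(Complex.I * ((θ t : ℝ) : ℂ)) = ((-θ t : ℝ) : ℂ) * Complex.I := by
        push_cast; ring
      rw [h, Complex.exp_ofReal_mul_I_re, Real.cos_neg]
    have hintcos : Integrable (fun t => Real.cos (θ t)) ν := by
      refine Integrable.mono' (integrable_const 1) (Real.continuous_cos.measurable.comp hθm).aestronglyMeasurable ?_
      filter_upwards with t
      rw [Real.norm_eq_abs]
      exact Real.abs_cos_le_one _
    calc Real.cos 1 * (B - A) = ∫ _t, Real.cos 1 ∂ν := by
          rw [integral_const, hν, measureReal_restrict_apply_univ, Real.volume_real_Icc,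
            max_eq_left (by linarith), smul_eq_mul, mul_comm]
      _ ≤ ∫ t, Real.cos (θ t) ∂ν := by
          refine integral_mono_ae (integrable_const _) hintcos ?_
          filter_upwards [ae_restrict_mem measurableSet_Icc] with t ht
          rw [← Real.cos_abs (θ t)]
          exact Real.cos_le_cos_of_nonneg_of_le_pi (abs_nonneg _)
            (by linarith [Real.pi_gt_three]) (hθbd t ht)
      _ = ∫ t, (Complex.exp (-(Complex.I * ((θ t : ℝ) : ℂ)))).re ∂ν := by
          simp only [hre]
  have habs : Real.cos 1 * (B - A) ≤
      ‖∫ t, Complex.exp (-(Complex.I * ((inner ℝ (X t) ξ : ℝ) : ℂ))) ∂ν‖ := by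
    have heq : (∫ t, Complex.exp (-(Complex.I * ((inner ℝ (X t) ξ : ℝ) : ℂ))) ∂ν)
        = (∫ t, Complex.exp (-(Complex.I * ((θ t : ℝ) : ℂ))) ∂ν) *
          Complex.exp (-(Complex.I * ((inner ℝ x0 ξ : ℝ) : ℂ))) := by
      rw [← integral_mul_const]
      exact integral_congr_ae (Filter.Eventually.of_forall hsplit)
    rw [heq, norm_mul, hnorm1, mul_one]
    exact hRe.trans (Complex.re_le_norm _)
  unfold fourierMeasure
  rw [norm_mul, hmap, Complex.norm_real, Real.norm_eq_abs, abs_of_pos hc]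
  calc (2 * Real.pi) ^ (-(n : ℝ) / 2) * Real.cos 1 * (B - A)
      = (2 * Real.pi) ^ (-(n : ℝ) / 2) * (Real.cos 1 * (B - A)) := by ring
    _ ≤ _ := mul_le_mul_of_nonneg_left habs hc.le
/-- Berman's diameter inequality for the range of a bounded Borel path in terms
of the Fourier regularity of its occupation measure. -/
theorem stmt_7 (n : ℕ) (hn : 0 < n) (p : ℝ≥0∞) (hp : 1 < p) (α : ℝ)
    (hα1 : -((n : ℝ) / p.toReal) < α) (hα2 : α < (n : ℝ) - n / p.toReal) :
    ∃ K : ℝ, 0 < K ∧ ∀ A B : ℝ, A < B →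
      ∀ X : ℝ → EuclideanSpace ℝ (Fin n), Measurable X →
        Bornology.IsBounded (X '' Icc A B) →
        ENNReal.ofReal (Metric.diam (X '' Icc A B) ^ (α + (n : ℝ) / p.toReal)) ≥
          ENNReal.ofReal K * volume (Icc A B) /
            eLpNorm (fun ξ => ‖ξ‖ ^ α *
              ‖fourierMeasure n ((volume.restrict (Icc A B)).map X) ξ‖) p volume := by
  classical
  set pt := p.toReal with hptdef
  set β := α + (n : ℝ) / pt with hβdef
  have hβ : 0 < β := by
    have h := hα1
    simp only [hβdef]
    linarith
  have hp0 : p ≠ 0 := (zero_lt_one.trans hp).ne'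
  have hpt0 : (0:ℝ) ≤ pt := ENNReal.toReal_nonneg
  set v1 : ℝ := (volume (ball (0 : EuclideanSpace ℝ (Fin n)) 1)).toReal with hv1def
  have hv1 : 0 < v1 :=
    ENNReal.toReal_pos (measure_ball_pos volume 0 one_pos).ne' measure_ball_lt_top.ne
  have h2n : (1:ℝ) < 2 ^ n := by exact one_lt_pow₀ (by norm_num) hn.ne'
  have h2nv : (0:ℝ) < ((2:ℝ) ^ n - 1) * v1 := mul_pos (by linarith) hv1
  set c3 : ℝ := (((2:ℝ) ^ n - 1) * v1) ^ ((1:ℝ) / pt) with hc3def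
  have hc3 : 0 < c3 := Real.rpow_pos_of_pos h2nv _
  set c0 : ℝ := (2 * Real.pi) ^ (-(n:ℝ) / 2) * Real.cos 1 with hc0def
  have hc0 : 0 < c0 :=
    mul_pos (Real.rpow_pos_of_pos (by positivity) _) Real.cos_one_pos
  have hmin : 0 < min 1 ((2:ℝ) ^ α) := lt_min one_pos (Real.rpow_pos_of_pos two_pos α)
  set C5 : ℝ := c0 * min 1 ((2:ℝ) ^ α) * c3 with hC5def
  have hC5 : 0 < C5 := mul_pos (mul_pos hc0 hmin) hc3
  have hK : 0 < C5 * (4:ℝ) ^ (-β) :=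
    mul_pos hC5 (Real.rpow_pos_of_pos (by norm_num) _)
  refine ⟨C5 * (4:ℝ) ^ (-β), hK, ?_⟩
  intro A B hAB X hX hbd
  have hBA : 0 < B - A := sub_pos.2 hAB
  haveI : Nonempty (Fin n) := ⟨⟨0, hn⟩⟩
  set D := Metric.diam (X '' Icc A B) with hDdef
  have hD0 : 0 ≤ D := diam_nonneg
  set N := eLpNorm (fun ξ => ‖ξ‖ ^ α *
      ‖fourierMeasure n ((volume.restrict (Icc A B)).map X) ξ‖) p volume with hNdef
  have L2 : ∀ r : ℝ, 0 < r → D * (2 * r) ≤ 1 →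
      ENNReal.ofReal (C5 * (B - A) * r ^ β) ≤ N := by
    intro r hr hr1
    set S := closedBall (0 : EuclideanSpace ℝ (Fin n)) (2 * r) \ ball 0 r with hSdef
    have hSm : MeasurableSet S := measurableSet_closedBall.diff measurableSet_ball
    have hsub : ball (0 : EuclideanSpace ℝ (Fin n)) r ⊆ closedBall 0 (2 * r) :=
      ball_subset_closedBall.trans (closedBall_subset_closedBall (by linarith))
    have hpos : (0:ℝ) < ((2:ℝ) ^ n - 1) * r ^ n * v1 :=
      mul_pos (mul_pos (by linarith) (pow_pos hr n)) hv1
    have hvolS : ENNReal.ofReal (((2:ℝ) ^ n - 1) * r ^ n * v1) ≤ volume S := by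
      have hdiff : volume S = volume (closedBall (0 : EuclideanSpace ℝ (Fin n)) (2 * r))
          - volume (ball (0 : EuclideanSpace ℝ (Fin n)) r) :=
        measure_diff hsub measurableSet_ball.nullMeasurableSet measure_ball_lt_top.ne
      rw [hdiff, Measure.addHaar_closedBall _ _ (by linarith), Measure.addHaar_ball _ _ hr.le,
        finrank_euclideanSpace_fin,
        ← ENNReal.sub_mul (fun _ _ => measure_ball_lt_top.ne),
        ← ENNReal.ofReal_sub _ (by positivity : (0:ℝ) ≤ r ^ n),
        show volume (ball (0 : EuclideanSpace ℝ (Fin n)) 1) = ENNReal.ofReal v1 from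
          (ENNReal.ofReal_toReal measure_ball_lt_top.ne).symm,
        ← ENNReal.ofReal_mul (sub_nonneg.2 (pow_le_pow_left₀ hr.le (by linarith : r ≤ 2*r) n))]
      apply ENNReal.ofReal_le_ofReal
      apply le_of_eq
      rw [mul_pow]
      ring
    have hS0 : volume S ≠ 0 :=
      ((ENNReal.ofReal_pos.2 hpos).trans_le hvolS).ne'
    set c : ℝ := c0 * (B - A) * (min 1 ((2:ℝ) ^ α) * r ^ α) with hcdef
    have hcpos : 0 < c :=
      mul_pos (mul_pos hc0 hBA) (mul_pos hmin (Real.rpow_pos_of_pos hr α))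
    have hpw : ∀ ξ : EuclideanSpace ℝ (Fin n), ‖S.indicator (fun _ => c) ξ‖ ≤
        ‖‖ξ‖ ^ α * ‖fourierMeasure n ((volume.restrict (Icc A B)).map X) ξ‖‖ := by
      intro ξ
      by_cases hmem : ξ ∈ S
      · rw [Set.indicator_of_mem hmem]
        have hξlb : r ≤ ‖ξ‖ := by
          have h := hmem.2
          simpa [mem_ball, dist_zero_right, not_lt] using h
        have hξub : ‖ξ‖ ≤ 2 * r := by
          have h := hmem.1
          simpa [mem_closedBall, dist_zero_right] using h
        have hξpos : 0 < ‖ξ‖ := hr.trans_le hξlb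
        have hrpow : min 1 ((2:ℝ) ^ α) * r ^ α ≤ ‖ξ‖ ^ α := by
          rcases le_or_gt 0 α with hα | hα
          · calc min 1 ((2:ℝ) ^ α) * r ^ α ≤ 1 * r ^ α :=
                mul_le_mul_of_nonneg_right (min_le_left _ _) (Real.rpow_nonneg hr.le _)
              _ = r ^ α := one_mul _
              _ ≤ ‖ξ‖ ^ α := Real.rpow_le_rpow hr.le hξlb hα
          · calc min 1 ((2:ℝ) ^ α) * r ^ α ≤ (2:ℝ) ^ α * r ^ α :=
                mul_le_mul_of_nonneg_right (min_le_right _ _) (Real.rpow_nonneg hr.le _)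
              _ = (2 * r) ^ α := (Real.mul_rpow (by norm_num) hr.le).symm
              _ ≤ ‖ξ‖ ^ α := Real.rpow_le_rpow_of_nonpos hξpos hξub hα.le
        have hfb : c0 * (B - A) ≤
            ‖fourierMeasure n ((volume.restrict (Icc A B)).map X) ξ‖ := by
          apply fourier_lb n A B hAB X hX hbd
          calc D * ‖ξ‖ ≤ D * (2 * r) := mul_le_mul_of_nonneg_left hξub hD0
            _ ≤ 1 := hr1
        have hF0 : (0:ℝ) ≤ ‖ξ‖ ^ α *
            ‖fourierMeasure n ((volume.restrict (Icc A B)).map X) ξ‖ :=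
          mul_nonneg (Real.rpow_nonneg (norm_nonneg _) _) (norm_nonneg _)
        rw [Real.norm_eq_abs, Real.norm_eq_abs, abs_of_pos hcpos, abs_of_nonneg hF0]
        calc c = (min 1 ((2:ℝ) ^ α) * r ^ α) * (c0 * (B - A)) := by rw [hcdef]; ring
          _ ≤ ‖ξ‖ ^ α * ‖fourierMeasure n ((volume.restrict (Icc A B)).map X) ξ‖ :=
            mul_le_mul hrpow hfb (mul_pos hc0 hBA).le (Real.rpow_nonneg (norm_nonneg _) _)
      · rw [Set.indicator_of_notMem hmem, norm_zero]
        exact norm_nonneg _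
    have hmono : eLpNorm (S.indicator fun _ => c) p volume ≤ N := by
      rw [hNdef]
      exact eLpNorm_mono hpw
    have hind : eLpNorm (S.indicator fun _ => c) p volume = ‖c‖ₑ * volume S ^ ((1:ℝ) / pt) :=
      eLpNorm_indicator_const' hSm hS0 hp0
    have hmix : (((2:ℝ) ^ n - 1) * r ^ n * v1) ^ ((1:ℝ) / pt) = c3 * r ^ ((n:ℝ) / pt) := by
      have h1 : ((2:ℝ) ^ n - 1) * r ^ n * v1 = (((2:ℝ) ^ n - 1) * v1) * r ^ ((n:ℝ)) := by
        rw [Real.rpow_natCast]; ring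
      rw [h1, Real.mul_rpow h2nv.le (Real.rpow_nonneg hr.le _), hc3def,
        ← Real.rpow_mul hr.le, mul_one_div]
    have hreal : C5 * (B - A) * r ^ β = c * (((2:ℝ) ^ n - 1) * r ^ n * v1) ^ ((1:ℝ) / pt) := by
      rw [hmix, hcdef, hC5def, hβdef, Real.rpow_add hr]
      ring
    calc ENNReal.ofReal (C5 * (B - A) * r ^ β)
        = ENNReal.ofReal c * ENNReal.ofReal ((((2:ℝ) ^ n - 1) * r ^ n * v1) ^ ((1:ℝ) / pt)) := by
          rw [hreal, ENNReal.ofReal_mul hcpos.le]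
      _ = ENNReal.ofReal c * ENNReal.ofReal (((2:ℝ) ^ n - 1) * r ^ n * v1) ^ ((1:ℝ) / pt) := by
          rw [ENNReal.ofReal_rpow_of_pos hpos]
      _ ≤ ENNReal.ofReal c * volume S ^ ((1:ℝ) / pt) :=
          mul_le_mul_right (ENNReal.rpow_le_rpow hvolS (by positivity)) _
      _ = ‖c‖ₑ * volume S ^ ((1:ℝ) / pt) := by
          rw [Real.enorm_eq_ofReal hcpos.le]
      _ = eLpNorm (S.indicator fun _ => c) p volume := hind.symm
      _ ≤ N := hmono
  rcases eq_or_lt_of_le hD0 with hD | hD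
  · have hNtop : N = ⊤ := by
      by_contra hN
      set m := N.toReal with hm
      have hqpos : (0:ℝ) < (m + 1) / (C5 * (B - A)) := by
        apply div_pos
        · have : (0:ℝ) ≤ m := ENNReal.toReal_nonneg
          linarith
        · exact mul_pos hC5 hBA
      set r := ((m + 1) / (C5 * (B - A))) ^ ((1:ℝ)/β) with hrq
      have hrpos : 0 < r := Real.rpow_pos_of_pos hqpos _
      have hrβ : r ^ β = (m + 1) / (C5 * (B - A)) := by
        rw [hrq, ← Real.rpow_mul hqpos.le, one_div_mul_cancel hβ.ne', Real.rpow_one]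
      have hle := L2 r hrpos (by rw [← hD, zero_mul]; exact zero_le_one)
      rw [hrβ, mul_div_cancel₀ _ (mul_pos hC5 hBA).ne'] at hle
      have h3 : m + 1 ≤ m := (ENNReal.ofReal_le_iff_le_toReal hN).1 hle
      linarith
    rw [hNtop, ENNReal.div_top]
    exact zero_le
  · set r := 1 / (4 * D) with hrdef
    have h4D : (0:ℝ) < 4 * D := by linarith
    have hrpos : 0 < r := by rw [hrdef]; positivity
    have hcond : D * (2 * r) ≤ 1 := by
      rw [hrdef]
      rw [show D * (2 * (1 / (4 * D))) = 1/2 by field_simp; ring]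
      norm_num
    have hlb := L2 r hrpos hcond
    refine ENNReal.div_le_of_le_mul ?_
    rw [Real.volume_Icc, ← ENNReal.ofReal_mul hK.le]
    calc ENNReal.ofReal (C5 * (4:ℝ) ^ (-β) * (B - A))
        ≤ ENNReal.ofReal (D ^ β) * ENNReal.ofReal (C5 * (B - A) * r ^ β) := by
          rw [← ENNReal.ofReal_mul (Real.rpow_nonneg hD0 β)]
          apply ENNReal.ofReal_le_ofReal
          apply le_of_eq
          have e1 : r ^ β = ((4:ℝ) ^ β * D ^ β)⁻¹ := by
            rw [hrdef, one_div, Real.inv_rpow h4D.le, Real.mul_rpow (by norm_num) hD0]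
          have hDβ : (0:ℝ) < D ^ β := Real.rpow_pos_of_pos hD β
          have h4β : (0:ℝ) < (4:ℝ) ^ β := Real.rpow_pos_of_pos (by norm_num) β
          rw [e1, Real.rpow_neg (by norm_num : (0:ℝ) ≤ 4)]
          field_simp
      _ ≤ ENNReal.ofReal (D ^ β) * N := mul_le_mul_right hlb _
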